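/- Let N ≥ 1, z ∈ {-1,1}^N, q_1,…,q_N ∈ [0,1], and let Z' be obtained from z by flipping each coordinate j independently with probability q_j. Then for every φ : {-1,1}^N → ℝ with |φ| ≤ M everywhere, | E[φ(Z')] − φ(z) − Σ_{j=1}^N q_j·(φ(σ_j z) − φ(z)) | ≤ 4·M·(Σ_{j=1}^N q_j)², where σ_j z is the configuration obtained from z by flipping only coordinate j. -/

import Mathlib

open MeasureTheory

private lemma weier_aux {ι : Type*} (s : Finset ι) (q : ι → ℝ)
    (hq0 : ∀ i ∈ s, 0 ≤ q i) (hq1 : ∀ i ∈ s, q i ≤ 1) :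
    1 - ∑ i ∈ s, q i ≤ ∏ i ∈ s, (1 - q i) := by
  induction s using Finset.cons_induction with
  | empty => simp
  | cons a s ha ih =>
    rw [Finset.prod_cons, Finset.sum_cons]
    have h1 := ih (fun i hi => hq0 i (by simp [hi])) (fun i hi => hq1 i (by simp [hi]))
    have hqa0 : 0 ≤ q a := hq0 a (by simp)
    have hqa1 : q a ≤ 1 := hq1 a (by simp)
    have hs0 : 0 ≤ ∑ i ∈ s, q i := Finset.sum_nonneg fun i hi => hq0 i (by simp [hi])
    nlinarith [mul_le_mul_of_nonneg_left h1 (by linarith : (0:ℝ) ≤ 1 - q a)]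

/-- Quantitative one-flip approximation of the expectation of `φ` under independent coordinate
flips: if `|φ| ≤ M`, then the expectation of `φ(Z')`, where `Z'` is obtained from `z` by flipping
each coordinate `j` independently with probability `q j`, differs from
`φ(z) + ∑ j, q j·(φ(σ_j z) - φ(z))` by at most `4·M·(∑ j, q j)²`. -/
theorem expectation_independent_flips_one_flip_approx (N : ℕ) (hN : 1 ≤ N)
    (z : Fin N → ℝ) (hz : ∀ j, z j = 1 ∨ z j = -1)
    (q : Fin N → ℝ) (hq0 : ∀ j, 0 ≤ q j) (hq1 : ∀ j, q j ≤ 1)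
    (φ : (Fin N → ℝ) → ℝ) (M : ℝ) (hM : ∀ y, |φ y| ≤ M) :
    |(∫ ε : Fin N → Bool,
          φ (fun j => if ε j then -z j else z j)
          ∂(Measure.pi fun j =>
              ENNReal.ofReal (q j) • Measure.dirac true
                + ENNReal.ofReal (1 - q j) • Measure.dirac false))
        - φ z
        - ∑ j, q j * (φ (Function.update z j (-z j)) - φ z)|
      ≤ 4 * M * (∑ j, q j) ^ 2 := by
  classical
  set S := ∑ j, q j with hSdef
  have hS0 : 0 ≤ S := Finset.sum_nonneg fun j _ => hq0 j
  have hM0 : 0 ≤ M := le_trans (abs_nonneg _) (hM z)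
  set ν : Fin N → Measure Bool := fun j =>
    ENNReal.ofReal (q j) • Measure.dirac true + ENNReal.ofReal (1 - q j) • Measure.dirac false
    with hν
  have hbt : ∀ j, ν j {true} = ENNReal.ofReal (q j) := by
    intro j; simp [hν, Measure.dirac_apply]
  have hbf : ∀ j, ν j {false} = ENNReal.ofReal (1 - q j) := by
    intro j; simp [hν, Measure.dirac_apply]
  haveI hprob : ∀ j, IsProbabilityMeasure (ν j) := by
    intro j
    constructor
    have h2 : (Set.univ : Set Bool) = {true} ∪ {false} := by ext b; cases b <;> simp
    rw [h2, measure_union (by simp) (by simp), hbt, hbf,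
      ← ENNReal.ofReal_add (hq0 j) (by linarith [hq1 j])]
    norm_num
  haveI : IsProbabilityMeasure (Measure.pi ν) := inferInstance
  -- weights
  set w : (Fin N → Bool) → ℝ := fun ε => ∏ j, (if ε j then q j else 1 - q j) with hwdef
  have hw : ∀ ε : Fin N → Bool, ((Measure.pi ν) {ε}).toReal = w ε := by
    intro ε
    have h1 : {ε} = Set.univ.pi (fun j => {ε j}) := by
      ext x; simp [funext_iff, Set.mem_pi]
    rw [h1, Measure.pi_pi, ENNReal.toReal_prod]
    refine Finset.prod_congr rfl fun j _ => ?_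
    cases h : ε j
    · rw [hbf, ENNReal.toReal_ofReal (by linarith [hq1 j])]; simp
    · rw [hbt, ENNReal.toReal_ofReal (hq0 j)]; simp
  have hw_nonneg : ∀ ε, 0 ≤ w ε := by
    intro ε
    refine Finset.prod_nonneg fun j _ => ?_
    cases h : ε j <;> simp [hq0 j, sub_nonneg.mpr (hq1 j)]
  -- integral as a finite sum
  set f : (Fin N → Bool) → ℝ := fun ε => φ (fun j => if ε j then -z j else z j) with hfdef
  have hint : ∫ ε, f ε ∂(Measure.pi ν) = ∑ ε, w ε * f ε := by
    rw [integral_fintype (f := f) (Integrable.of_finite (μ := Measure.pi ν) (f := f))]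
    simp only [smul_eq_mul, Measure.real]
    exact Finset.sum_congr rfl fun ε _ => by rw [hw]
  -- special configurations
  set c0 : Fin N → Bool := fun _ => false with hc0
  set eb : Fin N → (Fin N → Bool) := fun j k => if k = j then true else false with heb
  have hebinj : Function.Injective eb := by
    intro j k h
    by_contra hne
    have := congrFun h j
    simp [heb, hne] at this
  have hc0ne : ∀ j, c0 ≠ eb j := by
    intro j h
    have := congrFun h j
    simp [heb, hc0] at this
  have hfc0 : f c0 = φ z := by
    simp only [hfdef, hc0]
    congr 1
  have hfeb : ∀ j, f (eb j) = φ (Function.update z j (-z j)) := by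
    intro j
    simp only [hfdef, heb]
    congr 1
    funext k
    by_cases h : k = j <;> simp [h, Function.update]
  -- w on special configurations
  have hwc0 : w c0 = ∏ j, (1 - q j) := by
    simp [hwdef, hc0]
  have hwc0_ge : 1 - S ≤ w c0 := by
    rw [hwc0, hSdef]
    exact weier_aux Finset.univ q (fun i _ => hq0 i) (fun i _ => hq1 i)
  have hweb : ∀ j, w (eb j) = q j * ∏ k ∈ {j}ᶜ, (1 - q k) := by
    intro j
    rw [hwdef]
    simp only
    rw [Fintype.prod_eq_mul_prod_compl j]
    simp only [heb, if_pos rfl, if_true]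
    congr 1
    refine Finset.prod_congr rfl fun k hk => ?_
    have : k ≠ j := by simpa using hk
    simp [this]
  have hweb_le : ∀ j, w (eb j) ≤ q j := by
    intro j
    rw [hweb j]
    calc q j * ∏ k ∈ {j}ᶜ, (1 - q k) ≤ q j * 1 := by
          refine mul_le_mul_of_nonneg_left ?_ (hq0 j)
          refine Finset.prod_le_one (fun k _ => by linarith [hq1 k]) (fun k _ => by linarith [hq0 k])
      _ = q j := mul_one _
  have hweb_ge : ∀ j, q j * (1 - S) ≤ w (eb j) := by
    intro j
    rw [hweb j]
    refine mul_le_mul_of_nonneg_left ?_ (hq0 j)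
    calc (1 : ℝ) - S ≤ 1 - ∑ k ∈ {j}ᶜ, q k := by
          have : ∑ k ∈ {j}ᶜ, q k ≤ S := by
            refine Finset.sum_le_sum_of_subset_of_nonneg (Finset.subset_univ _)
              (fun k _ _ => hq0 k)
          linarith
      _ ≤ ∏ k ∈ {j}ᶜ, (1 - q k) :=
          weier_aux _ q (fun i _ => hq0 i) (fun i _ => hq1 i)
  -- linearized weights
  set w' : (Fin N → Bool) → ℝ := fun ε =>
    (if ε = c0 then 1 - S else 0) + ∑ j, (if ε = eb j then q j else 0) with hw'def
  have hw'c0 : w' c0 = 1 - S := by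
    have hz2 : ∑ j, (if c0 = eb j then q j else 0) = 0 :=
      Finset.sum_eq_zero fun j _ => if_neg (hc0ne j)
    simp [hw'def, hz2]
  have hw'eb : ∀ j, w' (eb j) = q j := by
    intro j
    simp only [hw'def]
    rw [if_neg (fun h => hc0ne j h.symm)]
    rw [Finset.sum_eq_single j (fun k _ hk => if_neg (fun h => hk (hebinj h).symm))
      (fun h => absurd (Finset.mem_univ j) h)]
    simp
  have hw'zero : ∀ ε, ε ≠ c0 → (∀ j, ε ≠ eb j) → w' ε = 0 := by
    intro ε h1 h2
    simp only [hw'def, if_neg h1]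
    rw [Finset.sum_eq_zero fun j _ => if_neg (h2 j)]
    ring
  -- sums of weights equal 1
  have hsum_w : ∑ ε, w ε = 1 := by
    rw [hwdef]
    rw [← Fintype.prod_sum (fun (j : Fin N) (b : Bool) => if b then q j else 1 - q j)]
    rw [Finset.prod_eq_one fun j _ => ?_]
    simp
  have hsum_w' : ∑ ε, w' ε = 1 := by
    simp only [hw'def]
    rw [Finset.sum_add_distrib]
    rw [Finset.sum_ite_eq' Finset.univ c0 (fun _ => 1 - S)]
    rw [Finset.sum_comm]
    have : ∀ j : Fin N, ∑ ε : Fin N → Bool, (if ε = eb j then q j else 0) = q j := by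
      intro j
      rw [Finset.sum_ite_eq' Finset.univ (eb j) (fun _ => q j)]
      simp
    rw [Finset.sum_congr rfl fun j _ => this j]
    simp [hSdef]
  -- the linearized expectation
  have hT : ∑ ε, w' ε * f ε
      = φ z + ∑ j, q j * (φ (Function.update z j (-z j)) - φ z) := by
    simp only [hw'def, add_mul, Finset.sum_add_distrib, Finset.sum_mul]
    have h1 : ∑ ε, (if ε = c0 then 1 - S else 0) * f ε = (1 - S) * φ z := by
      have he : ∀ ε : Fin N → Bool,
          (if ε = c0 then 1 - S else 0) * f ε = if ε = c0 then (1 - S) * f ε else 0 := by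
        intro ε; split <;> ring
      rw [Finset.sum_congr rfl fun ε _ => he ε]
      rw [Finset.sum_ite_eq' Finset.univ c0 (fun ε => (1 - S) * f ε)]
      simp [hfc0]
    have h2 : ∑ ε, ∑ j, (if ε = eb j then q j else 0) * f ε
        = ∑ j, q j * φ (Function.update z j (-z j)) := by
      rw [Finset.sum_comm]
      refine Finset.sum_congr rfl fun j _ => ?_
      have he : ∀ ε : Fin N → Bool,
          (if ε = eb j then q j else 0) * f ε = if ε = eb j then q j * f ε else 0 := by
        intro ε; split <;> ring
      rw [Finset.sum_congr rfl fun ε _ => he ε]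
      rw [Finset.sum_ite_eq' Finset.univ (eb j) (fun ε => q j * f ε)]
      simp [hfeb j]
    rw [h1, h2, hSdef]
    rw [Finset.sum_congr rfl fun j _ => (mul_sub (q j) (φ (Function.update z j (-z j))) (φ z))]
    rw [Finset.sum_sub_distrib, ← Finset.sum_mul]
    ring
  -- the absolute-difference sum
  have habs : ∀ ε, |w ε - w' ε| = w ε + w' ε - 2 * min (w ε) (w' ε) := by
    intro ε
    rcases le_total (w ε) (w' ε) with h | h
    · rw [abs_of_nonpos (by linarith), min_eq_left h]; ring
    · rw [abs_of_nonneg (by linarith), min_eq_right h]; ring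
  have hmin : 1 - S ^ 2 ≤ ∑ ε, min (w ε) (w' ε) := by
    set A : Finset (Fin N → Bool) := insert c0 (Finset.image eb Finset.univ) with hA
    have hAs : ∑ ε ∈ A, min (w ε) (w' ε) ≤ ∑ ε, min (w ε) (w' ε) := by
      refine Finset.sum_le_sum_of_subset_of_nonneg (Finset.subset_univ A) ?_
      intro ε _ hε
      have h1 : ε ≠ c0 := by
        intro h
        exact hε (by rw [h, hA]; exact Finset.mem_insert_self _ _)
      have h2 : ∀ j, ε ≠ eb j := by
        intro j h
        refine hε ?_
        rw [h, hA]
        exact Finset.mem_insert_of_mem (Finset.mem_image_of_mem eb (Finset.mem_univ j))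
      exact le_min (hw_nonneg ε) (hw'zero ε h1 h2).ge
    have hc0img : c0 ∉ Finset.image eb Finset.univ := by
      intro h
      obtain ⟨j, _, hj⟩ := Finset.mem_image.mp h
      exact hc0ne j hj.symm
    have hAval : ∑ ε ∈ A, min (w ε) (w' ε)
        = min (w c0) (w' c0) + ∑ j, min (w (eb j)) (w' (eb j)) := by
      rw [hA, Finset.sum_insert hc0img,
        Finset.sum_image (fun a _ b _ h => hebinj h)]
    have hterm0 : min (w c0) (w' c0) = 1 - S := by
      rw [hw'c0, min_eq_right hwc0_ge]
    have htermj : ∀ j, q j * (1 - S) ≤ min (w (eb j)) (w' (eb j)) := by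
      intro j
      rw [hw'eb j, min_eq_left (hweb_le j)]
      exact hweb_ge j
    calc (1 : ℝ) - S ^ 2 = (1 - S) + S * (1 - S) := by ring
      _ = (1 - S) + ∑ j, q j * (1 - S) := by
          rw [← Finset.sum_mul, ← hSdef]
      _ ≤ min (w c0) (w' c0) + ∑ j, min (w (eb j)) (w' (eb j)) := by
          rw [hterm0]
          exact (add_le_add_iff_left _).mpr (Finset.sum_le_sum fun j _ => htermj j)
      _ = ∑ ε ∈ A, min (w ε) (w' ε) := hAval.symm
      _ ≤ ∑ ε, min (w ε) (w' ε) := hAs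
  have habs_sum : ∑ ε, |w ε - w' ε| ≤ 2 * S ^ 2 := by
    rw [Finset.sum_congr rfl fun ε _ => habs ε]
    rw [Finset.sum_sub_distrib, Finset.sum_add_distrib, hsum_w, hsum_w']
    rw [← Finset.mul_sum]
    linarith [hmin]
  -- final estimate
  rw [hint, sub_sub, ← hT, ← Finset.sum_sub_distrib,
    Finset.sum_congr rfl fun ε _ => (sub_mul (w ε) (w' ε) (f ε)).symm]
  calc |∑ ε, (w ε - w' ε) * f ε| ≤ ∑ ε, |(w ε - w' ε) * f ε| :=
        Finset.abs_sum_le_sum_abs _ _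
    _ ≤ ∑ ε, |w ε - w' ε| * M := by
        refine Finset.sum_le_sum fun ε _ => ?_
        rw [abs_mul]
        exact mul_le_mul_of_nonneg_left (hM _) (abs_nonneg _)
    _ = (∑ ε, |w ε - w' ε|) * M := (Finset.sum_mul _ _ _).symm
    _ ≤ 2 * S ^ 2 * M := mul_le_mul_of_nonneg_right habs_sum hM0
    _ ≤ 4 * M * S ^ 2 := by nlinarith [sq_nonneg S]
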